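/- For every integer k > 1, the density of the set {n : p(n,k) is odd and p(n,k-1) is odd} equals the density of the set {n : p(n,k) is even and p(n,k-1) is odd}; that is, lim_{N→∞} #{n ≤ N : p(n,k) odd, p(n,k-1) odd}/N = lim_{N→∞} #{n ≤ N : p(n,k) even, p(n,k-1) odd}/N, and in particular both limits exist and are equal. -/

import Mathlib

/-- `p n k` is the number of partitions of `n` into parts each of size at most `k`
(with `p 0 k = 1`). -/
def p (n k : ℕ) : ℕ :=
  (Finset.univ.filter (fun P : n.Partition => ∀ i ∈ P.parts, i ≤ k)).card

lemma p_zero {n : ℕ} (hn : 0 < n) : p n 0 = 0 := by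
  rw [p, Finset.card_eq_zero, Finset.filter_eq_empty_iff]
  intro P _
  simp only [not_forall]
  have hne : P.parts ≠ 0 := by
    intro h
    have := P.parts_sum
    rw [h] at this
    simp at this
    omega
  obtain ⟨i, hi⟩ := Multiset.exists_mem_of_ne_zero hne
  exact ⟨i, hi, by have := P.parts_pos hi; omega⟩

lemma p_rec {n k : ℕ} (hk : 1 ≤ k) (hn : k ≤ n) :
    p n k = p n (k - 1) + p (n - k) k := by
  classical
  rw [p, ← Finset.card_filter_add_card_filter_not
    (p := fun P : n.Partition => k ∈ P.parts), add_comm]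
  congr 1
  · rw [p, Finset.filter_filter]
    congr 1
    apply Finset.filter_congr
    intro P _
    constructor
    · rintro ⟨h1, h2⟩ i hi
      have h3 := h1 i hi
      have : i ≠ k := fun h => h2 (h ▸ hi)
      omega
    · intro h
      refine ⟨fun i hi => le_trans (h i hi) (by omega), fun hm => ?_⟩
      have := h k hm
      omega
  · rw [p]
    refine Finset.card_bij'
      (fun P hP => (⟨P.parts.erase k, fun {i} hi => P.parts_pos (Multiset.mem_of_mem_erase hi), ?_⟩ : (n-k).Partition))
      (fun Q hQ => (⟨k ::ₘ Q.parts, fun {i} hi => ?_, ?_⟩ : n.Partition)) ?_ ?_ ?_ ?_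
    · simp only [Finset.mem_filter, Finset.mem_univ, true_and] at hP
      have hks : k ∈ P.parts := hP.2
      have := Multiset.cons_erase hks
      have hsum : k + (P.parts.erase k).sum = n := by
        rw [← Multiset.sum_cons, this, P.parts_sum]
      omega
    · rcases Multiset.mem_cons.mp hi with h | h
      · omega
      · exact Q.parts_pos h
    · rw [Multiset.sum_cons, Q.parts_sum]
      omega
    · intro P hP
      simp only [Finset.mem_filter, Finset.mem_univ, true_and] at hP ⊢
      exact fun i hi => hP.1 i (Multiset.mem_of_mem_erase hi)
    · intro Q hQ
      simp only [Finset.mem_filter, Finset.mem_univ, true_and] at hQ ⊢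
      refine ⟨fun i hi => ?_, Multiset.mem_cons_self _ _⟩
      rcases Multiset.mem_cons.mp hi with h | h
      · omega
      · exact hQ i h
    · intro P hP
      simp only [Finset.mem_filter, Finset.mem_univ, true_and] at hP
      apply Nat.Partition.ext
      simp [Multiset.cons_erase hP.2]
    · intro Q hQ
      apply Nat.Partition.ext
      simp [Multiset.erase_cons_head]

lemma per_mul {α : Type*} (u : ℕ → α) (T N0 : ℕ)
    (h : ∀ n ≥ N0, u (n + T) = u n) (c : ℕ) : ∀ n ≥ N0, u (n + c * T) = u n := by
  induction c with
  | zero => simp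
  | succ c ih =>
    intro n hn
    have : n + (c + 1) * T = (n + c * T) + T := by ring
    rw [this, h _ (by omega), ih n hn]

lemma ev_per (k : ℕ) : ∃ T > 0, ∃ N0 : ℕ, ∀ n ≥ N0, p (n + T) k % 2 = p n k % 2 := by
  induction k with
  | zero =>
    exact ⟨1, one_pos, 1, fun n hn => by rw [p_zero (by omega), p_zero (by omega)]⟩
  | succ k ih =>
    obtain ⟨T, hT, N0, hper⟩ := ih
    set f : ℕ → ℕ := fun n => p n (k + 1) % 2 with hf
    set M : ℕ := max N0 (k + 1) with hM
    -- state map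
    set F : ℕ → Fin T × (Fin (k + 1) → Fin 2) :=
      fun m => (⟨m % T, Nat.mod_lt _ hT⟩, fun i => ⟨f (M + m + i), Nat.mod_lt _ (by omega)⟩)
      with hF
    obtain ⟨a, b, hab, heq⟩ := Finite.exists_ne_map_eq_of_infinite F
    wlog hlt : a < b generalizing a b
    · exact this b a (Ne.symm hab) heq.symm (by omega)
    set T2 : ℕ := b - a with hT2
    have hT2pos : 0 < T2 := by omega
    have hmod : a % T = b % T := congrArg (Fin.val ∘ Prod.fst) heq
    have hdvd : T ∣ T2 := by
      exact (Nat.modEq_iff_dvd' (le_of_lt hlt)).mp hmod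
    obtain ⟨c, hc⟩ := hdvd
    have hgper : ∀ n ≥ N0, p (n + T2) k % 2 = p n k % 2 := by
      intro n hn
      have := per_mul (fun n => p n k % 2) T N0 hper c n hn
      simpa [hc, mul_comm] using this
    have hstate : ∀ i : Fin (k + 1), f (M + a + i) = f (M + b + i) := by
      intro i
      have := congrFun (congrArg Prod.snd heq) i
      exact congrArg Fin.val this
    -- recurrence for f
    have hrec : ∀ n ≥ k + 1, f n = (p n k % 2 + f (n - (k + 1))) % 2 := by
      intro n hn
      rw [hf]
      simp only
      rw [p_rec (by omega) hn]
      simp [Nat.add_mod]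
    -- main claim
    have main : ∀ n, M + a ≤ n → f (n + T2) = f n := by
      intro n
      induction n using Nat.strong_induction_on with
      | _ n IH =>
        intro hn
        by_cases hcase : n < M + a + (k + 1)
        · have hi : n - (M + a) < k + 1 := by omega
          have h1 := hstate ⟨n - (M + a), hi⟩
          simp only at h1
          have e1 : M + a + (n - (M + a)) = n := by omega
          have e2 : M + b + (n - (M + a)) = n + T2 := by omega
          rw [e1, e2] at h1
          exact h1.symm
        · push_neg at hcase
          have hn1 : k + 1 ≤ n := by omega
          have hn2 : k + 1 ≤ n + T2 := by omega
          rw [hrec _ hn2, hrec _ hn1]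
          have hg : p (n + T2) k % 2 = p n k % 2 :=
            hgper n (by omega)
          have hfih : f (n + T2 - (k + 1)) = f (n - (k + 1)) := by
            have : n - (k + 1) + T2 = n + T2 - (k + 1) := by omega
            rw [← this]
            exact IH (n - (k + 1)) (by omega) (by omega)
          rw [hg, hfih]
    exact ⟨T2, hT2pos, M + a, main⟩

section density
variable (pred : ℕ → Prop) [DecidablePred pred] (T N0 : ℕ)

def W (m : ℕ) : ℕ := ((Finset.Ico m (m + T)).filter pred).card

lemma W_succ (hper : ∀ n ≥ N0, (pred (n + T) ↔ pred n)) {m : ℕ} (hm : N0 ≤ m) :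
    W pred T (m + 1) = W pred T m := by
  classical
  have h1 : Finset.Ico m (m + T + 1) = insert (m + T) (Finset.Ico m (m + T)) :=
    Nat.Ico_succ_right_eq_insert_Ico (by omega)
  have h2 : Finset.Ico m (m + T + 1) = insert m (Finset.Ico (m + 1) (m + T + 1)) :=
    (Finset.insert_Ico_add_one_left_eq_Ico (by omega)).symm
  have c1 : ((Finset.Ico m (m + T + 1)).filter pred).card =
      ((Finset.Ico m (m + T)).filter pred).card + (if pred (m + T) then 1 else 0) := by
    rw [h1, Finset.filter_insert]
    split
    · rw [Finset.card_insert_of_notMem (by simp)]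
    · simp
  have c2 : ((Finset.Ico m (m + T + 1)).filter pred).card =
      ((Finset.Ico (m + 1) (m + T + 1)).filter pred).card + (if pred m then 1 else 0) := by
    rw [h2, Finset.filter_insert]
    split
    · rw [Finset.card_insert_of_notMem (by simp)]
    · simp
  have hp : pred (m + T) ↔ pred m := hper m hm
  have : (if pred (m + T) then 1 else 0) = (if pred m then 1 else 0) := by
    simp [hp]
  rw [this] at c1
  have : m + 1 + T = m + T + 1 := by omega
  rw [W, W, this]
  omega

lemma W_const (hper : ∀ n ≥ N0, (pred (n + T) ↔ pred n)) {m : ℕ} (hm : N0 ≤ m) :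
    W pred T m = W pred T N0 := by
  obtain ⟨j, rfl⟩ : ∃ j, m = N0 + j := ⟨m - N0, by omega⟩
  clear hm
  induction j with
  | zero => rfl
  | succ j ih =>
    have := W_succ pred T N0 hper (m := N0 + j) (by omega)
    rw [← Nat.add_assoc] at *
    rw [this, ih]

def C (N : ℕ) : ℕ := ((Finset.range N).filter pred).card

lemma C_add (hper : ∀ n ≥ N0, (pred (n + T) ↔ pred n)) {m : ℕ} (hm : N0 ≤ m) :
    C pred (m + T) = C pred m + W pred T N0 := by
  classical
  have h1 : Finset.range (m + T) = Finset.Ico 0 m ∪ Finset.Ico m (m + T) := by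
    rw [Finset.range_eq_Ico, Finset.Ico_union_Ico_eq_Ico (by omega) (by omega)]
  rw [C, h1, Finset.filter_union, Finset.card_union_of_disjoint]
  · rw [← W_const pred T N0 hper hm]
    rw [C, Finset.range_eq_Ico, W]
  · exact (Finset.Ico_disjoint_Ico_consecutive 0 m (m + T)).mono
      (Finset.filter_subset _ _) (Finset.filter_subset _ _)

def D (c : ℕ) (N : ℕ) : ℤ := (C pred N : ℤ) * T - c * N

lemma D_bounded (hT : 0 < T) (hper : ∀ n ≥ N0, (pred (n + T) ↔ pred n)) :
    ∀ N, ∃ m < N0 + T, D pred T (W pred T N0) N = D pred T (W pred T N0) m := by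
  intro N
  induction N using Nat.strong_induction_on with
  | _ N IH =>
    by_cases h : N < N0 + T
    · exact ⟨N, h, rfl⟩
    · push_neg at h
      obtain ⟨m, hm, he⟩ := IH (N - T) (by omega)
      refine ⟨m, hm, ?_⟩
      rw [← he]
      have hNT : N - T + T = N := by omega
      have := C_add pred T N0 hper (m := N - T) (by omega)
      rw [hNT] at this
      rw [D, D, this]
      push_cast
      have : ((N : ℤ)) = (N - T : ℕ) + (T : ℕ) := by push_cast; omega
      rw [this]
      push_cast
      ring

lemma density_of_ev_per (hT : 0 < T)
    (hper : ∀ n ≥ N0, (pred (n + T) ↔ pred n)) :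
    Filter.Tendsto (fun N : ℕ => (((Finset.range (N + 1)).filter pred).card : ℝ) / N)
      Filter.atTop (nhds ((W pred T N0 : ℝ) / T)) := by
  classical
  set c : ℕ := W pred T N0 with hc
  set B : ℕ := (Finset.range (N0 + T)).sup (fun m => (D pred T c m).natAbs) with hB
  have hDb : ∀ N, (D pred T c N).natAbs ≤ B := by
    intro N
    obtain ⟨m, hm, he⟩ := D_bounded pred T N0 hT hper N
    rw [he]
    exact Finset.le_sup (f := fun m => (D pred T c m).natAbs) (Finset.mem_range.mpr hm)
  -- first: tendsto with C N / N
  have key : Filter.Tendsto (fun N : ℕ => (C pred N : ℝ) / N)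
      Filter.atTop (nhds ((c : ℝ) / T)) := by
    have h0 : Filter.Tendsto (fun N : ℕ => (C pred N : ℝ) / N - (c : ℝ) / T)
        Filter.atTop (nhds 0) := by
      refine squeeze_zero_norm' ?_ (tendsto_const_div_atTop_nhds_zero_nat (B : ℝ))
      filter_upwards [Filter.eventually_ge_atTop 1] with N hN
      have hN0 : (0:ℝ) < N := by exact_mod_cast hN
      have hT0 : (0:ℝ) < T := by exact_mod_cast hT
      have hT1 : (1:ℝ) ≤ T := by exact_mod_cast hT
      have he : (C pred N : ℝ) / N - (c : ℝ) / T = (D pred T c N : ℝ) / (N * T) := by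
        rw [D]
        push_cast
        field_simp
      have h1 : |(D pred T c N : ℝ)| ≤ (B : ℝ) := by
        have h2 : (((D pred T c N).natAbs : ℝ)) ≤ (B:ℝ) := by exact_mod_cast hDb N
        rwa [Nat.cast_natAbs, Int.cast_abs] at h2
      rw [he, Real.norm_eq_abs, abs_div, abs_of_pos (by positivity : (0:ℝ) < N * T)]
      rw [div_le_div_iff₀ (by positivity) hN0]
      have hB0 : (0:ℝ) ≤ B := le_trans (abs_nonneg _) h1
      nlinarith [mul_le_mul_of_nonneg_right h1 hN0.le, mul_le_mul_of_nonneg_left hT1 (mul_nonneg hB0 hN0.le)]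
    have := h0.add_const ((c : ℝ) / T)
    simpa using this
  -- now adapt to range (N+1) / N
  have comp : Filter.Tendsto (fun N : ℕ => (C pred (N + 1) : ℝ) / (N + 1))
      Filter.atTop (nhds ((c : ℝ) / T)) := by
    have h := key.comp (Filter.tendsto_add_atTop_nat 1)
    simp only [Function.comp_def] at h
    apply h.congr
    intro N
    push_cast
    ring
  have rat : Filter.Tendsto (fun N : ℕ => ((N : ℝ) + 1) / N) Filter.atTop (nhds 1) := by
    have h1 : Filter.Tendsto (fun N : ℕ => 1 + 1 / (N:ℝ)) Filter.atTop (nhds (1 + 0)) :=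
      Filter.Tendsto.const_add _ (tendsto_one_div_atTop_nhds_zero_nat)
    apply h1.congr' ?_ |>.mono_right (by simp)
    filter_upwards [Filter.eventually_ge_atTop 1] with N hN
    have : (N:ℝ) ≠ 0 := by positivity
    field_simp
  have := comp.mul rat
  rw [mul_one] at this
  apply this.congr'
  filter_upwards [Filter.eventually_ge_atTop 1] with N hN
  have hN0 : (N:ℝ) ≠ 0 := by
    have : (1:ℝ) ≤ N := by exact_mod_cast hN
    linarith
  have : ((N:ℝ) + 1) ≠ 0 := by positivity
  rw [C]
  push_cast
  field_simp

end density

theorem stmt_6 (k : ℕ) (hk : 1 < k) :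
    ∃ d : ℝ,
      Filter.Tendsto
        (fun N : ℕ =>
          (((Finset.range (N + 1)).filter
            (fun n => Odd (p n k) ∧ Odd (p n (k - 1)))).card : ℝ) / N)
        Filter.atTop (nhds d) ∧
      Filter.Tendsto
        (fun N : ℕ =>
          (((Finset.range (N + 1)).filter
            (fun n => Even (p n k) ∧ Odd (p n (k - 1)))).card : ℝ) / N)
        Filter.atTop (nhds d) := by
  obtain ⟨T, hT, N0, hper⟩ := ev_per k
  set M : ℕ := N0 + k with hM
  have charA : ∀ n, k ≤ n → ((Odd (p n k) ∧ Odd (p n (k - 1))) ↔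
      (p n k % 2 = 1 ∧ ¬ p (n - k) k % 2 = 1)) := by
    intro n hn
    have hr := p_rec (k := k) (by omega) hn
    simp only [Nat.odd_iff]
    omega
  have charB : ∀ n, k ≤ n → ((Even (p n k) ∧ Odd (p n (k - 1))) ↔
      (¬ p n k % 2 = 1 ∧ p (n - k) k % 2 = 1)) := by
    intro n hn
    have hr := p_rec (k := k) (by omega) hn
    simp only [Nat.even_iff, Nat.odd_iff]
    omega
  have hperA : ∀ n ≥ M, ((Odd (p (n + T) k) ∧ Odd (p (n + T) (k - 1))) ↔
      (Odd (p n k) ∧ Odd (p n (k - 1)))) := by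
    intro n hn
    rw [charA _ (by omega), charA _ (by omega)]
    have e1 : n + T - k = (n - k) + T := by omega
    rw [e1, hper n (by omega), hper (n - k) (by omega)]
  have hperB : ∀ n ≥ M, ((Even (p (n + T) k) ∧ Odd (p (n + T) (k - 1))) ↔
      (Even (p n k) ∧ Odd (p n (k - 1)))) := by
    intro n hn
    rw [charB _ (by omega), charB _ (by omega)]
    have e1 : n + T - k = (n - k) + T := by omega
    rw [e1, hper n (by omega), hper (n - k) (by omega)]
  have hwin : W (fun n => Odd (p n k) ∧ Odd (p n (k - 1))) T M
      = W (fun n => Even (p n k) ∧ Odd (p n (k - 1))) T M := by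
    set s : Finset ℕ := Finset.Ico M (M + T) with hs
    have hsub : ∀ n ∈ s, k ≤ n := by
      intro n hn
      rw [hs, Finset.mem_Ico] at hn
      omega
    have eA : s.filter (fun n => Odd (p n k) ∧ Odd (p n (k - 1)))
        = s.filter (fun n => p n k % 2 = 1 ∧ ¬ p (n - k) k % 2 = 1) :=
      Finset.filter_congr (fun n hn => charA n (hsub n hn))
    have eB : s.filter (fun n => Even (p n k) ∧ Odd (p n (k - 1)))
        = s.filter (fun n => p (n - k) k % 2 = 1 ∧ ¬ p n k % 2 = 1) := by
      refine Finset.filter_congr (fun n hn => ?_)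
      rw [charB n (hsub n hn)]
      exact and_comm
    have sQ : ∀ (P P' : ℕ → Prop) [DecidablePred P] [DecidablePred P'],
        (s.filter (fun n => P n ∧ P' n)).card + (s.filter (fun n => P n ∧ ¬ P' n)).card
          = (s.filter P).card := by
      intro P P' _ _
      rw [← Finset.filter_filter, ← Finset.filter_filter]
      exact Finset.card_filter_add_card_filter_not (p := P')
    have hQR : (s.filter (fun n => p n k % 2 = 1)).card
        = (s.filter (fun n => p (n - k) k % 2 = 1)).card := by
      have shift : (s.filter (fun n => p (n - k) k % 2 = 1)).card
          = ((Finset.Ico N0 (N0 + T)).filter (fun n => p n k % 2 = 1)).card := by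
        apply Finset.card_nbij' (fun n => n - k) (fun n => n + k)
        · intro a ha
          simp only [hs, Finset.mem_coe, Finset.mem_filter, Finset.mem_Ico, hM] at ha ⊢
          exact ⟨by omega, ha.2⟩
        · intro a ha
          simp only [hs, Finset.mem_coe, Finset.mem_filter, Finset.mem_Ico, hM] at ha ⊢
          refine ⟨by omega, ?_⟩
          have e : a + k - k = a := by omega
          rw [e]
          exact ha.2
        · intro a ha
          simp only [hs, Finset.mem_coe, Finset.mem_filter, Finset.mem_Ico, hM] at ha
          dsimp only
          omega
        · intro a ha
          dsimp only
          omega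
      have w1 : (s.filter (fun n => p n k % 2 = 1)).card
          = W (fun n => p n k % 2 = 1) T N0 :=
        W_const _ T N0 (fun n hn => by rw [hper n hn]) (m := M) (by omega)
      have w2 : ((Finset.Ico N0 (N0 + T)).filter (fun n => p n k % 2 = 1)).card
          = W (fun n => p n k % 2 = 1) T N0 := rfl
      rw [shift, w1, w2]
    have e1 := sQ (fun n => p n k % 2 = 1) (fun n => p (n - k) k % 2 = 1)
    have e2 := sQ (fun n => p (n - k) k % 2 = 1) (fun n => p n k % 2 = 1)
    have wA : W (fun n => Odd (p n k) ∧ Odd (p n (k - 1))) T M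
        = (s.filter (fun n => p n k % 2 = 1 ∧ ¬ p (n - k) k % 2 = 1)).card := by
      rw [W, ← hs, eA]
    have wB : W (fun n => Even (p n k) ∧ Odd (p n (k - 1))) T M
        = (s.filter (fun n => p (n - k) k % 2 = 1 ∧ ¬ p n k % 2 = 1)).card := by
      rw [W, ← hs, eB]
    have comm : (s.filter (fun n => p n k % 2 = 1 ∧ p (n - k) k % 2 = 1)).card
        = (s.filter (fun n => p (n - k) k % 2 = 1 ∧ p n k % 2 = 1)).card :=
      congrArg Finset.card (Finset.filter_congr fun n _ => and_comm)
    omega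
  refine ⟨((W (fun n => Odd (p n k) ∧ Odd (p n (k - 1))) T M : ℝ)) / T, ?_, ?_⟩
  · exact density_of_ev_per _ T M hT hperA
  · rw [hwin]
    exact density_of_ev_per _ T M hT hperB
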